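/- For an integer n and natural number i, the expansion of G_{n,i}(z,w) = (z^{-n+1}/i!)(d/dw)^i(w^{n-1}/(z-w)) in the domain |w| > |z| (expanding 1/(z-w) = -Σ_{k≥0} z^k w^{-k-1}) equals -Σ_{j≥0} binom(n-2-j, i) w^{n-j-2-i} z^{-n+1+j}. -/

import Mathlib

/-- Generalized binomial coefficient `binom(n, i)` for an integer `n`. -/
noncomputable def gchoose (n : ℤ) (i : ℕ) : ℂ :=
  (∏ k ∈ Finset.range i, ((n : ℂ) - k)) / (Nat.factorial i : ℂ)

/-- The rational function `G_{n,i}(z,w) = (z^{-n+1}/i!) (d/dw)^i (w^{n-1}/(z-w))`. -/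
noncomputable def Grat (n : ℤ) (i : ℕ) (z w : ℂ) : ℂ :=
  z ^ (-n + 1) / (Nat.factorial i : ℂ) * iteratedDeriv i (fun w' => w' ^ (n - 1) / (z - w')) w

lemma gchoose_zero (m : ℤ) : gchoose m 0 = 1 := by simp [gchoose]

lemma gchoose_succ (m : ℤ) (i : ℕ) :
    ((i:ℂ)+1) * gchoose m (i+1) = gchoose m i * ((m:ℂ) - i) := by
  unfold gchoose
  rw [Finset.prod_range_succ, Nat.factorial_succ]
  have h1 : ((Nat.factorial i : ℂ)) ≠ 0 := by exact_mod_cast Nat.factorial_ne_zero i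
  have h2 : ((i:ℂ) + 1) ≠ 0 := Nat.cast_add_one_ne_zero i
  push_cast
  field_simp

lemma gchoose_bound (m : ℤ) (i : ℕ) : ‖gchoose m i‖ ≤ ((|m| : ℝ) + i)^i := by
  unfold gchoose
  rw [norm_div, norm_prod]
  have hfac : (1:ℝ) ≤ ‖(Nat.factorial i : ℂ)‖ := by
    rw [Complex.norm_natCast]
    exact_mod_cast Nat.one_le_iff_ne_zero.2 (Nat.factorial_ne_zero i)
  have h1 : ∏ k ∈ Finset.range i, ‖(m:ℂ) - (k:ℕ)‖ ≤ ((|m|:ℝ) + i)^i := by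
    calc ∏ k ∈ Finset.range i, ‖(m:ℂ) - (k:ℕ)‖
        ≤ ∏ _k ∈ Finset.range i, ((|m|:ℝ) + i) := ?_
      _ = ((|m|:ℝ) + i)^i := by rw [Finset.prod_const, Finset.card_range]
    apply Finset.prod_le_prod (fun k _ => norm_nonneg _)
    intro k hk
    have heq : ((m:ℂ) - (k:ℕ)) = ((m - k : ℤ) : ℂ) := by push_cast; ring
    rw [heq, Complex.norm_intCast]
    push_cast
    have hk' : (k:ℝ) ≤ i := by exact_mod_cast (Finset.mem_range.1 hk).le
    calc |(m:ℝ) - k| ≤ |(m:ℝ)| + |(k:ℝ)| := abs_sub _ _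
    _ ≤ |(m:ℝ)| + i := by rw [abs_of_nonneg (by positivity : (0:ℝ) ≤ (k:ℝ))]; linarith
  calc _ ≤ ∏ k ∈ Finset.range i, ‖(m:ℂ) - (k:ℕ)‖ :=
        div_le_self (Finset.prod_nonneg fun k _ => norm_nonneg _) hfac
  _ ≤ _ := h1

lemma real_zpow_le_max {x r R : ℝ} (hr : 0 < r) (hx : r ≤ x) (hX : x ≤ R) (m : ℤ) :
    x ^ m ≤ max (R ^ m) (r ^ m) := by
  have hx0 : 0 < x := lt_of_lt_of_le hr hx
  rcases le_or_gt 0 m with hm | hm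
  · refine le_max_of_le_left ?_
    obtain ⟨k, rfl⟩ := Int.eq_ofNat_of_zero_le hm
    rw [zpow_natCast, zpow_natCast]
    exact pow_le_pow_left₀ hx0.le hX k
  · refine le_max_of_le_right ?_
    obtain ⟨k, hk⟩ : ∃ k : ℕ, m = -(k:ℤ) := ⟨(-m).toNat, by omega⟩
    subst hk
    rw [zpow_neg, zpow_neg, zpow_natCast, zpow_natCast]
    exact inv_anti₀ (by positivity) (pow_le_pow_left₀ hr.le hx k)

lemma summable_aux {q : ℝ} (h0 : 0 < q) (h1 : q < 1) (k : ℕ) :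
    Summable fun j : ℕ => ((j:ℝ)+1)^k * q^j := by
  have hq : ‖q‖ < 1 := by rw [Real.norm_eq_abs, abs_of_pos h0]; exact h1
  have S := summable_pow_mul_geometric_of_norm_lt_one (R := ℝ) k hq
  have S2 := (summable_nat_add_iff 1).2 S
  have S3 := S2.mul_left q⁻¹
  refine S3.congr fun j => ?_
  push_cast
  field_simp
  ring

noncomputable def Fterm (n : ℤ) (i : ℕ) (z : ℂ) (j : ℕ) (y : ℂ) : ℂ :=
  -(gchoose (n - 2 - (j:ℤ)) i) * y ^ (n - (j:ℤ) - 2 - (i:ℤ)) * z ^ (-n + 1 + (j:ℤ))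

lemma Fterm_hasDerivAt (n : ℤ) (i : ℕ) (z : ℂ) (j : ℕ) (y : ℂ) (hy : y ≠ 0) :
    HasDerivAt (Fterm n i z j) (((i:ℂ)+1) * Fterm n (i+1) z j y) y := by
  have h := ((hasDerivAt_zpow (n - (j:ℤ) - 2 - ((i:ℕ):ℤ)) y (Or.inl hy)).const_mul
      (-(gchoose (n - 2 - (j:ℤ)) i))).mul_const (z ^ (-n + 1 + (j:ℤ)))
  convert h using 1
  · rfl
  · rfl
  · rfl
  unfold Fterm
  rw [show (n - (j:ℤ) - 2 - ((i+1:ℕ):ℤ)) = n - (j:ℤ) - 2 - ((i:ℕ):ℤ) - 1 by push_cast; ring]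
  have hgs := gchoose_succ (n - 2 - (j:ℤ)) i
  push_cast at hgs ⊢
  linear_combination (- y ^ ((n:ℤ) - (j:ℤ) - 2 - (i:ℤ) - 1) * z ^ (-n + 1 + (j:ℤ))) * hgs

lemma base_case (n : ℤ) (z : ℂ) (hz : z ≠ 0) (w : ℂ) (hw' : ‖z‖ < ‖w‖) :
    HasSum (fun j => Fterm n 0 z j w) (Grat n 0 z w) := by
  have hw : w ≠ 0 := norm_pos_iff.mp (lt_trans (norm_pos_iff.mpr hz) hw')
  have hzw : ‖z / w‖ < 1 := by
    rw [norm_div]; exact (div_lt_one (lt_trans (norm_pos_iff.mpr hz) hw')).2 hw'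
  have hne : z - w ≠ 0 := sub_ne_zero.mpr (by rintro rfl; exact lt_irrefl _ hw')
  have hne2 : w - z ≠ 0 := sub_ne_zero.mpr (by rintro rfl; exact lt_irrefl _ hw')
  have hgeo := (hasSum_geometric_of_norm_lt_one hzw).mul_left (-(w ^ ((n:ℤ) - 2) * z ^ (-n + 1)))
  have hfun : (fun j : ℕ => -(w ^ ((n:ℤ)-2) * z ^ (-n+1)) * (z / w) ^ j) = fun j => Fterm n 0 z j w := by
    funext j
    unfold Fterm
    rw [gchoose_zero,
      show (n - (j:ℤ) - 2 - ((0:ℕ):ℤ)) = (n-2) + (-(j:ℤ)) by push_cast; ring,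
      zpow_add₀ hw ((n:ℤ)-2) (-(j:ℤ)), zpow_add₀ hz (-n+1) (j:ℤ),
      zpow_neg w (j:ℤ), zpow_natCast w j, zpow_natCast z j, div_pow, div_eq_mul_inv]
    ring
  rw [hfun] at hgeo
  convert hgeo using 1
  · rfl
  unfold Grat
  rw [iteratedDeriv_zero, Nat.factorial_zero,
    show (n:ℤ) - 1 = (n-2) + 1 by ring, zpow_add_one₀ hw]
  have h1 : (1 : ℂ) - z / w = (w - z) / w := by field_simp
  rw [h1, inv_div]
  field_simp
  ring

lemma step_case (n : ℤ) (z : ℂ) (hz : z ≠ 0) (i : ℕ)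
    (IH : ∀ w : ℂ, ‖z‖ < ‖w‖ → HasSum (fun j => Fterm n i z j w) (Grat n i z w))
    (w : ℂ) (hw' : ‖z‖ < ‖w‖) :
    HasSum (fun j => Fterm n (i+1) z j w) (Grat n (i+1) z w) := by
  have hz0 : 0 < ‖z‖ := norm_pos_iff.mpr hz
  set ρ := (‖w‖ - ‖z‖)/2 with hρdef
  set r := (‖z‖ + ‖w‖)/2 with hrdef
  set R := ‖w‖ + ρ with hRdef
  have hρ : 0 < ρ := by rw [hρdef]; linarith
  have hzr : ‖z‖ < r := by rw [hrdef]; linarith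
  have hr0 : 0 < r := hz0.trans hzr
  have hball : ∀ y : ℂ, y ∈ Metric.ball w ρ → r < ‖y‖ ∧ ‖y‖ ≤ R := by
    intro y hy
    rw [Metric.mem_ball, dist_eq_norm] at hy
    have h1 : ‖w‖ - ‖y‖ ≤ ‖y - w‖ := by
      have := norm_sub_norm_le w y; rwa [norm_sub_rev] at this
    have h2 : ‖y‖ - ‖w‖ ≤ ‖y - w‖ := norm_sub_norm_le y w
    constructor
    · rw [hrdef]; rw [hρdef] at hy; linarith
    · rw [hRdef]; linarith
  set A := ((|n| : ℤ) : ℝ) + 3 + i with hA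
  have hAn : (0:ℝ) ≤ ((|n| : ℤ) : ℝ) := by exact_mod_cast abs_nonneg n
  have hA1 : (1:ℝ) ≤ A := by rw [hA]; have : (0:ℝ) ≤ (i:ℝ) := Nat.cast_nonneg i; linarith
  set m := n - 2 - ((i+1 : ℕ) : ℤ) with hm
  set M := max (R ^ m) (r ^ m) with hM
  have hM0 : 0 ≤ M := le_trans (zpow_nonneg hr0.le m) (le_max_right _ _)
  set Z := ‖z‖ ^ (-n + 1) with hZ
  have hZ0 : 0 ≤ Z := zpow_nonneg hz0.le _
  set q := ‖z‖ / r with hq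
  have hq0 : 0 < q := div_pos hz0 hr0
  have hq1 : q < 1 := (div_lt_one hr0).2 hzr
  set u : ℕ → ℝ := fun j => ((i:ℝ)+1) * (A*((j:ℝ)+1))^(i+1) * M * Z * q^j with hu_def
  have hu : Summable u := by
    have h1 := (summable_aux hq0 hq1 (i+1)).mul_left (((i:ℝ)+1) * A^(i+1) * M * Z)
    refine h1.congr fun j => ?_
    simp only [hu_def]
    rw [mul_pow]
    ring
  have hgb : ∀ j : ℕ, ‖gchoose (n - 2 - (j:ℤ)) (i+1)‖ ≤ (A*((j:ℝ)+1))^(i+1) := by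
    intro j
    refine le_trans (gchoose_bound _ _) ?_
    apply pow_le_pow_left₀ (by positivity)
    have habs : |n - 2 - (j:ℤ)| ≤ |n| + 2 + j := by
      have h1 := le_abs_self n; have h2 := neg_abs_le n
      rw [abs_le]; omega
    have habs' : ((|n - 2 - (j:ℤ)| : ℤ) : ℝ) ≤ ((|n| : ℤ) : ℝ) + 2 + j := by exact_mod_cast habs
    have hj0 : (0:ℝ) ≤ (j:ℝ) := Nat.cast_nonneg j
    have hA' : A = |(n:ℝ)| + 3 + i := by rw [hA]; push_cast; ring
    push_cast
    push_cast at habs'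
    nlinarith [mul_nonneg (sub_nonneg.2 hA1) hj0, habs', hA']
  have hnorm : ∀ (j : ℕ) (y : ℂ), y ≠ 0 →
      ‖((i:ℂ)+1) * Fterm n (i+1) z j y‖
        = ((i:ℝ)+1) * ‖gchoose (n - 2 - (j:ℤ)) (i+1)‖ * (‖y‖ ^ m * (‖y‖⁻¹)^j) * (Z * ‖z‖^j) := by
    intro j y hy0
    unfold Fterm
    rw [show (n - (j:ℤ) - 2 - ((i+1:ℕ):ℤ)) = m + (-(j:ℤ)) by rw [hm]; push_cast; ring,
        zpow_add₀ hy0 m (-(j:ℤ)), zpow_add₀ hz (-n+1) (j:ℤ),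
        zpow_neg y (j:ℤ), zpow_natCast y j, zpow_natCast z j]
    have hi1 : ((i:ℂ)+1) = ((i+1:ℕ):ℂ) := by push_cast; ring
    simp only [norm_mul, norm_neg, norm_zpow, norm_inv, norm_pow, hi1, Complex.norm_natCast]
    rw [hZ]
    push_cast
    ring
  have hbound : ∀ (j : ℕ) (y : ℂ), y ∈ Metric.ball w ρ →
      ‖((i:ℂ)+1) * Fterm n (i+1) z j y‖ ≤ u j := by
    intro j y hy
    obtain ⟨h1, h2⟩ := hball y hy
    have hy0 : y ≠ 0 := norm_pos_iff.mp (hr0.trans h1)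
    rw [hnorm j y hy0]
    have e1 : ‖y‖ ^ m ≤ M := real_zpow_le_max hr0 h1.le h2 m
    have e2 : (‖y‖⁻¹)^j ≤ (r⁻¹)^j :=
      pow_le_pow_left₀ (inv_nonneg.2 (norm_nonneg y)) (inv_anti₀ hr0 h1.le) j
    calc ((i:ℝ)+1) * ‖gchoose (n - 2 - (j:ℤ)) (i+1)‖ * (‖y‖ ^ m * (‖y‖⁻¹)^j) * (Z * ‖z‖^j)
        ≤ ((i:ℝ)+1) * ((A*((j:ℝ)+1))^(i+1)) * (M * (r⁻¹)^j) * (Z * ‖z‖^j) := by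
          gcongr <;> first | exact hgb j | exact e1 | exact e2 | positivity
    _ = u j := by simp only [hu_def, hq]; rw [div_pow, inv_pow]; ring
  have hsum_w : Summable fun j => Fterm n i z j w := (IH w hw').summable
  have hkey : HasDerivAt (fun y => ∑' j, Fterm n i z j y)
      (∑' j, ((i:ℂ)+1) * Fterm n (i+1) z j w) w :=
    hasDerivAt_tsum_of_isPreconnected hu Metric.isOpen_ball (convex_ball w ρ).isPreconnected
      (fun j y hy => Fterm_hasDerivAt n i z j y (norm_pos_iff.mp (hr0.trans (hball y hy).1)))
      hbound (Metric.mem_ball_self hρ) hsum_w (Metric.mem_ball_self hρ)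
  have hEq : (fun y => ∑' j, Fterm n i z j y) =ᶠ[nhds w] fun y => Grat n i z y := by
    filter_upwards [Metric.ball_mem_nhds w hρ] with y hy
    exact (IH y (hzr.trans (hball y hy).1)).tsum_eq
  have hG : HasDerivAt (fun y => Grat n i z y)
      (∑' j, ((i:ℂ)+1) * Fterm n (i+1) z j w) w := hkey.congr_of_eventuallyEq hEq.symm
  have hzn : z ^ (-n+1:ℤ) ≠ 0 := zpow_ne_zero _ hz
  have hfac : ((Nat.factorial i : ℂ)) ≠ 0 := by exact_mod_cast Nat.factorial_ne_zero i
  have hc : z ^ (-n + 1) / ((Nat.factorial i : ℂ)) ≠ 0 := div_ne_zero hzn hfac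
  have h2 : (fun y => (z ^ (-n + 1) / ((Nat.factorial i : ℂ)))⁻¹ * Grat n i z y)
      = iteratedDeriv i (fun w' => w' ^ (n-1)/(z - w')) := by
    funext y
    unfold Grat
    rw [inv_mul_cancel_left₀ hc]
  have h3 : HasDerivAt (iteratedDeriv i (fun w' => w' ^ (n-1)/(z-w')))
      ((z ^ (-n + 1) / ((Nat.factorial i : ℂ)))⁻¹ * ∑' j, ((i:ℂ)+1) * Fterm n (i+1) z j w) w := by
    have := hG.const_mul (z ^ (-n + 1) / ((Nat.factorial i : ℂ)))⁻¹
    rwa [h2] at this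
  have hι : ((i:ℂ)+1) ≠ 0 := Nat.cast_add_one_ne_zero i
  have h4 : Grat n (i+1) z w = ((i:ℂ)+1)⁻¹ * ∑' j, ((i:ℂ)+1) * Fterm n (i+1) z j w := by
    have h5 : iteratedDeriv (i+1) (fun w' => w' ^ (n-1)/(z-w')) w
        = (z ^ (-n + 1) / ((Nat.factorial i : ℂ)))⁻¹ * ∑' j, ((i:ℂ)+1) * Fterm n (i+1) z j w := by
      rw [iteratedDeriv_succ]; exact h3.deriv
    unfold Grat
    rw [h5, Nat.factorial_succ]
    push_cast
    field_simp
  have hS : Summable fun j => ((i:ℂ)+1) * Fterm n (i+1) z j w :=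
    Summable.of_norm_bounded hu (fun j => hbound j w (Metric.mem_ball_self hρ))
  have h6 := hS.hasSum.mul_left ((i:ℂ)+1)⁻¹
  rw [← h4] at h6
  have hfun : (fun j => ((i:ℂ)+1)⁻¹ * (((i:ℂ)+1) * Fterm n (i+1) z j w))
      = fun j => Fterm n (i+1) z j w := funext fun j => inv_mul_cancel_left₀ hι _
  rwa [hfun] at h6

/-- In the domain `|w| > |z| > 0`, the expansion of `G_{n,i}(z,w)` (expanding
`1/(z-w) = -Σ_{k≥0} z^k w^{-k-1}`) is `-Σ_{j≥0} binom(n-2-j, i) w^{n-j-2-i} z^{-n+1+j}`. -/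
theorem stmt2 (n : ℤ) (i : ℕ) (z w : ℂ) (hz : z ≠ 0) (hw : w ≠ 0) (h : ‖z‖ < ‖w‖) :
    HasSum (fun j : ℕ =>
      -(gchoose (n - 2 - (j : ℤ)) i) * w ^ (n - (j : ℤ) - 2 - (i : ℤ)) * z ^ (-n + 1 + (j : ℤ)))
      (Grat n i z w) := by
  have main : ∀ w : ℂ, ‖z‖ < ‖w‖ → HasSum (fun j => Fterm n i z j w) (Grat n i z w) := by
    induction i with
    | zero => exact fun w hw => base_case n z hz w hw
    | succ i IH => exact fun w hw => step_case n z hz i IH w hw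
  have := main w h
  simpa only [Fterm] using this
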